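/- Let T = [a1, …, an] be a list of integers with all ai ≥ 2, let d be the tridiagonal discriminant, and for 1 ≤ j ≤ n set u_j = (d([a1, …, a(j−1)]) + d([a(j+1), …, an])) / d(T) (a rational number; the numerator uses d([]) = 1). Then (u_1, …, u_n) satisfies the adjunction system: a_j·u_j − u_{j−1} − u_{j+1} = 2 − deg(j) for all j, where u_0 = u_{n+1} = 0 and deg(j) is the number of neighbours of j in the path graph (deg = 1 for j = 1 and j = n when n ≥ 2, deg = 0 when n = 1, deg = 2 otherwise). Moreover this is the unique rational solution of this system. -/

import Mathlib

/-- The tridiagonal matrix with diagonal entries given by the list `T`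
and entries `-1` on the sub- and super-diagonal. -/
def tridiagMatrix (T : List ℤ) : Matrix (Fin T.length) (Fin T.length) ℤ :=
  Matrix.of fun i j =>
    if i = j then T.get i
    else if (i : ℕ) + 1 = (j : ℕ) ∨ (j : ℕ) + 1 = (i : ℕ) then -1 else 0

/-- The discriminant of a chain `T`: the determinant of the associated tridiagonal
matrix (so the discriminant of the empty list is `1`). -/
def chainDisc (T : List ℤ) : ℤ := (tridiagMatrix T).det

/-- The log discrepancy of the `j`-th entry (1-indexed) of the chain `T`:
`ld_j(T) = (d(T_{<j}) + d(T_{>j})) / d(T)`, where `T_{<j}` is the prefix before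
position `j` and `T_{>j}` the suffix after position `j`. -/
def chainLd (T : List ℤ) (j : ℕ) : ℚ :=
  ((chainDisc (T.take (j - 1)) : ℚ) + (chainDisc (T.drop j) : ℚ)) / (chainDisc T : ℚ)

/-- `u : ℕ → ℚ` (with `u j` the value at the `j`-th vertex, 1-indexed) satisfies the
adjunction system of the chain `T`:  `a_j·u_j − u_{j−1} − u_{j+1} = 2 − deg(j)` for
`1 ≤ j ≤ n`, with the conventions `u_0 = u_{n+1} = 0`, where `deg(j)` is the number of
neighbours of `j` in the path graph on `n` vertices. -/
def IsAdjunctionSolution (T : List ℤ) (u : ℕ → ℚ) : Prop :=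
  u 0 = 0 ∧ u (T.length + 1) = 0 ∧
    ∀ j, 1 ≤ j → j ≤ T.length →
      (T.getD (j - 1) 0 : ℚ) * u j - u (j - 1) - u (j + 1) =
        2 - ((if j = 1 then 0 else 1) + (if j = T.length then 0 else 1))

/-- **Log discrepancies of an admissible chain solve the adjunction system, uniquely.**
For a list `T` of integers `≥ 2`, the log discrepancies `ld_j(T)` (extended by `0`
outside `1 ≤ j ≤ n`) satisfy the adjunction system, and any rational solution of the
system agrees with them at every `1 ≤ j ≤ n`. -/


def triM (n : ℕ) (f : ℕ → ℤ) : Matrix (Fin n) (Fin n) ℤ :=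
  Matrix.of fun i j =>
    if (i : ℕ) = (j : ℕ) then f i
    else if (i : ℕ) + 1 = (j : ℕ) ∨ (j : ℕ) + 1 = (i : ℕ) then -1 else 0

lemma val_succAbove {n : ℕ} (p : Fin (n + 1)) (i : Fin n) :
    ((p.succAbove i : Fin (n+1)) : ℕ) = if (i : ℕ) < (p : ℕ) then (i : ℕ) else (i : ℕ) + 1 := by
  unfold Fin.succAbove
  split_ifs with h1 h2 h2 <;> simp_all [Fin.lt_def, Fin.castSucc, Fin.castAdd, Fin.castLE]

lemma tridiag_eq_triM (T : List ℤ) :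
    tridiagMatrix T = triM T.length (fun k => T.getD k 0) := by
  ext i j
  have hget : T.get i = T.getD (i : ℕ) 0 := by
    rw [List.get_eq_getElem, List.getD_eq_getElem?_getD, List.getElem?_eq_getElem i.isLt]
    rfl
  simp only [tridiagMatrix, triM, Matrix.of_apply, hget, Fin.ext_iff]

lemma chainDisc_eq_triM (T : List ℤ) :
    chainDisc T = (triM T.length (fun k => T.getD k 0)).det := by
  rw [chainDisc, tridiag_eq_triM]

lemma triM_det_zero (f : ℕ → ℤ) : (triM 0 f).det = 1 := Matrix.det_isEmpty

lemma triM_det_one (f : ℕ → ℤ) : (triM 1 f).det = f 0 := by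
  rw [Matrix.det_fin_one]; simp [triM]

lemma triM_det_rec (n : ℕ) (f : ℕ → ℤ) :
    (triM (n + 1 + 1) f).det =
      f 0 * (triM (n + 1) (fun k => f (k + 1))).det - (triM n (fun k => f (k + 2))).det := by
  rw [Matrix.det_succ_row_zero, Fin.sum_univ_succ, Fin.sum_univ_succ]
  have hzero : ∀ i : Fin n,
      (-1 : ℤ) ^ ((i.succ.succ : Fin (n+1+1)) : ℕ) * triM (n+1+1) f 0 i.succ.succ *
        ((triM (n+1+1) f).submatrix Fin.succ i.succ.succ.succAbove).det = 0 := by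
    intro i
    have h : triM (n+1+1) f 0 i.succ.succ = 0 := by
      simp only [triM, Matrix.of_apply, Fin.val_succ, Fin.val_zero]
      have h1 : ¬ ((0:ℕ) = (i:ℕ) + 1 + 1) := by omega
      have h2 : ¬ ((0:ℕ) + 1 = (i:ℕ) + 1 + 1 ∨ (i:ℕ) + 1 + 1 + 1 = 0) := by omega
      split_ifs <;> simp_all <;> omega
    rw [h]; ring
  rw [Finset.sum_eq_zero (fun i _ => hzero i)]
  have h00 : triM (n+1+1) f 0 0 = f 0 := by simp [triM]
  have h01 : triM (n+1+1) f 0 (Fin.succ 0) = -1 := by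
    simp only [triM, Matrix.of_apply, Fin.val_zero, Fin.val_succ]
    norm_num
  have hminor0 : (triM (n+1+1) f).submatrix Fin.succ ((0 : Fin (n+1+1)).succAbove) =
      triM (n+1) (fun k => f (k + 1)) := by
    ext i j
    simp only [Matrix.submatrix_apply, Fin.succAbove_zero, triM, Matrix.of_apply, Fin.val_succ]
    split_ifs with h1 h2 h3 h4 <;> first | rfl | omega | (exfalso; omega) | (congr 1; omega)
  have hminor1 : ((triM (n+1+1) f).submatrix Fin.succ ((Fin.succ 0 : Fin (n+1+1)).succAbove)).det
      = -(triM n (fun k => f (k + 2))).det := by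
    have hone : (Fin.succ 0 : Fin (n+1+1)) = (1 : Fin (n+1+1)) := rfl
    rw [hone, Matrix.det_succ_column_zero, Fin.sum_univ_succ]
    have hA00 : (triM (n+1+1) f).submatrix Fin.succ ((1 : Fin (n+1+1)).succAbove) 0 0 = -1 := by
      simp only [Matrix.submatrix_apply, triM, Matrix.of_apply]
      rw [show (((1 : Fin (n+1+1)).succAbove 0 : Fin (n+1+1)) : ℕ) = 0 from by
        rw [val_succAbove]; simp]
      simp
    have hArest : ∀ i : Fin n,
        (-1:ℤ) ^ ((i.succ : Fin (n+1)) : ℕ) *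
          (triM (n+1+1) f).submatrix Fin.succ ((1 : Fin (n+1+1)).succAbove) i.succ 0 *
          (((triM (n+1+1) f).submatrix Fin.succ ((1 : Fin (n+1+1)).succAbove)).submatrix
            i.succ.succAbove Fin.succ).det = 0 := by
      intro i
      have h : (triM (n+1+1) f).submatrix Fin.succ ((1 : Fin (n+1+1)).succAbove) i.succ 0 = 0 := by
        simp only [Matrix.submatrix_apply, triM, Matrix.of_apply]
        rw [show (((1 : Fin (n+1+1)).succAbove 0 : Fin (n+1+1)) : ℕ) = 0 from by
          rw [val_succAbove]; simp]
        simp only [Fin.val_succ]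
        have h1 : ¬ ((i:ℕ) + 1 + 1 = 0) := by omega
        have h2 : ¬ ((i:ℕ) + 1 + 1 + 1 = 0 ∨ (0:ℕ) + 1 = (i:ℕ) + 1 + 1) := by omega
        rw [if_neg h1, if_neg h2]
      rw [h]; ring
    rw [Finset.sum_eq_zero (fun i _ => hArest i)]
    have hB : ((triM (n+1+1) f).submatrix Fin.succ ((1 : Fin (n+1+1)).succAbove)).submatrix
        (0 : Fin (n+1)).succAbove Fin.succ = triM n (fun k => f (k + 2)) := by
      ext i j
      simp only [Matrix.submatrix_apply, Fin.succAbove_zero, triM, Matrix.of_apply, Fin.val_succ]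
      rw [show (((1 : Fin (n+1+1)).succAbove j.succ : Fin (n+1+1)) : ℕ) = (j : ℕ) + 2 from by
        rw [val_succAbove]; simp]
      split_ifs with h1 h2 h3 h4 <;> first | rfl | omega | (exfalso; omega) | (congr 1; omega)
    rw [hB, hA00]
    simp
  rw [h00, h01, hminor0, hminor1]
  simp
  ring

lemma chainDisc_nil : chainDisc [] = 1 := by
  rw [chainDisc_eq_triM]; exact triM_det_zero _

lemma chainDisc_singleton (a : ℤ) : chainDisc [a] = a := by
  rw [chainDisc_eq_triM, show ([a] : List ℤ).length = 1 from rfl, triM_det_one]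
  rfl

lemma chainDisc_cons_cons (a b : ℤ) (L : List ℤ) :
    chainDisc (a :: b :: L) = a * chainDisc (b :: L) - chainDisc L := by
  rw [chainDisc_eq_triM, chainDisc_eq_triM, chainDisc_eq_triM,
    show (a :: b :: L).length = L.length + 1 + 1 from by simp,
    show (b :: L).length = L.length + 1 from by simp, triM_det_rec]
  congr 2 <;> first | rfl | (funext k; simp)

lemma chainDisc_concat : ∀ (L : List ℤ) (a : ℤ), L ≠ [] →
    chainDisc (L ++ [a]) = a * chainDisc L - chainDisc L.dropLast
  | [b], a, _ => by
      simp only [List.cons_append, List.nil_append, List.dropLast]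
      rw [chainDisc_cons_cons, chainDisc_nil, chainDisc_singleton, chainDisc_singleton]
      ring
  | [b, c], a, _ => by
      rw [show ([b, c] : List ℤ) ++ [a] = b :: c :: [a] from rfl,
        show ([b, c] : List ℤ).dropLast = [b] from rfl,
        chainDisc_cons_cons b c [a], chainDisc_cons_cons c a [],
        chainDisc_cons_cons b c [], chainDisc_nil, chainDisc_singleton a, chainDisc_singleton c,
        chainDisc_singleton b]
      ring
  | b :: c :: d :: L', a, _ => by
      have h1 := chainDisc_concat (c :: d :: L') a (by simp)
      have h2 := chainDisc_concat (d :: L') a (by simp)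
      rw [show (b :: c :: d :: L') ++ [a] = b :: c :: ((d :: L') ++ [a]) from rfl]
      rw [chainDisc_cons_cons]
      rw [show (c : ℤ) :: ((d :: L') ++ [a]) = (c :: d :: L') ++ [a] from rfl, h1, h2]
      rw [show ((c : ℤ) :: d :: L').dropLast = c :: (d :: L').dropLast from by simp]
      rw [show ((b : ℤ) :: c :: d :: L').dropLast = b :: c :: (d :: L').dropLast from by simp]
      rw [chainDisc_cons_cons b c (d :: L'), chainDisc_cons_cons b c ((d :: L').dropLast)]
      ring

lemma chainDisc_bounds : ∀ (T : List ℤ), (∀ a ∈ T, 2 ≤ a) →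
    chainDisc T.tail ≤ chainDisc T ∧ 1 ≤ chainDisc T
  | [], _ => by rw [chainDisc_nil]; exact ⟨le_refl 1, le_refl 1⟩
  | [a], h => by
      have : 2 ≤ a := h a (by simp)
      rw [chainDisc_singleton, show ([a] : List ℤ).tail = [] from rfl, chainDisc_nil]
      omega
  | a :: b :: L, h => by
      have ha : 2 ≤ a := h a (by simp)
      have ih := chainDisc_bounds (b :: L) (fun x hx => h x (by simp [hx]))
      simp only [List.tail_cons] at ih
      rw [show (a :: b :: L).tail = b :: L from rfl, chainDisc_cons_cons]
      constructor
      · nlinarith [ih.1, ih.2]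
      · nlinarith [ih.1, ih.2]

lemma chainDisc_pos (T : List ℤ) (h : ∀ a ∈ T, 2 ≤ a) : 0 < chainDisc T :=
  lt_of_lt_of_le zero_lt_one (chainDisc_bounds T h).2

lemma list_getD_eq (T : List ℤ) (k : ℕ) (hk : k < T.length) : T.getD k 0 = T[k] := by
  rw [List.getD_eq_getElem?_getD, List.getElem?_eq_getElem hk]; rfl

lemma take_concat (T : List ℤ) (k : ℕ) (hk : k < T.length) :
    T.take (k + 1) = T.take k ++ [T.getD k 0] := by
  rw [List.take_succ, List.getElem?_eq_getElem hk, list_getD_eq T k hk]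
  rfl

lemma take_ne_nil (T : List ℤ) (k : ℕ) (h1 : 1 ≤ k) (hk : k ≤ T.length) : T.take k ≠ [] := by
  intro hcon
  have := congrArg List.length hcon
  rw [List.length_take] at this
  simp only [List.length_nil] at this
  omega

lemma chainDisc_take_one (T : List ℤ) (h : 1 ≤ T.length) :
    chainDisc (T.take 1) = T.getD 0 0 := by
  match T with
  | [] => simp at h
  | x :: rest =>
      rw [show (x :: rest).take 1 = [x] from rfl, chainDisc_singleton]
      rfl

lemma chainDisc_take_step (T : List ℤ) (k : ℕ) (h2 : 2 ≤ k) (hk : k ≤ T.length) :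
    chainDisc (T.take k) =
      T.getD (k - 1) 0 * chainDisc (T.take (k - 1)) - chainDisc (T.take (k - 2)) := by
  have e1 : T.take k = T.take (k - 1) ++ [T.getD (k - 1) 0] := by
    rw [← take_concat T (k - 1) (by omega)]
    congr 1
    omega
  have e2 : T.take (k - 1) = T.take (k - 2) ++ [T.getD (k - 2) 0] := by
    rw [← take_concat T (k - 2) (by omega)]
    congr 1
    omega
  rw [e1, chainDisc_concat _ _ (take_ne_nil T (k - 1) (by omega) (by omega))]
  congr 1
  rw [e2, List.dropLast_concat]

lemma chainDisc_drop_step (T : List ℤ) (k : ℕ) (h1 : 1 ≤ k) (hk : k + 1 ≤ T.length) :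
    chainDisc (T.drop (k - 1)) =
      T.getD (k - 1) 0 * chainDisc (T.drop k) - chainDisc (T.drop (k + 1)) := by
  have e1 : T.drop (k - 1) = T.getD (k - 1) 0 :: T.drop k := by
    rw [List.drop_eq_getElem_cons (show k - 1 < T.length by omega), list_getD_eq T (k-1) (by omega),
      show k - 1 + 1 = k by omega]
  have e2 : T.drop k = T.getD k 0 :: T.drop (k + 1) := by
    rw [List.drop_eq_getElem_cons (show k < T.length by omega), list_getD_eq T k (by omega)]
  rw [e1, e2, chainDisc_cons_cons, ← e2]

lemma chainDisc_drop_last (T : List ℤ) (h : 1 ≤ T.length) :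
    chainDisc (T.drop (T.length - 1)) = T.getD (T.length - 1) 0 := by
  have e1 : T.drop (T.length - 1) = [T.getD (T.length - 1) 0] := by
    rw [List.drop_eq_getElem_cons (show T.length - 1 < T.length by omega),
      list_getD_eq T (T.length - 1) (by omega)]
    rw [show T.length - 1 + 1 = T.length by omega, List.drop_length]
  rw [e1, chainDisc_singleton]

lemma chainLd_adjunction (T : List ℤ) (h : ∀ a ∈ T, 2 ≤ a) :
    IsAdjunctionSolution T (fun j => if 1 ≤ j ∧ j ≤ T.length then chainLd T j else 0) := by
  have hD : (0:ℤ) < chainDisc T := chainDisc_pos T h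
  have hDQ : (chainDisc T : ℚ) ≠ 0 := by
    exact_mod_cast hD.ne'
  refine ⟨by simp, by simp, ?_⟩
  intro j hj1 hjn
  simp only []
  rw [if_pos ⟨hj1, hjn⟩]
  by_cases hj : j = 1
  · subst hj
    rw [show (1:ℕ) - 1 = 0 from rfl, if_neg (show ¬(1 ≤ 0 ∧ 0 ≤ T.length) from by omega)]
    by_cases hn : T.length = 1
    · -- n = 1, j = 1
      rw [if_neg (by omega : ¬(1 ≤ 2 ∧ 2 ≤ T.length))]
      have h1 : chainDisc (T.take (1 - 1)) = 1 := by
        rw [show (1:ℕ) - 1 = 0 from rfl, List.take_zero, chainDisc_nil]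
      have h2 : chainDisc (T.drop 1) = 1 := by
        rw [show (1:ℕ) = T.length from hn.symm, List.drop_length, chainDisc_nil]
      have h3 : T.getD 0 0 = chainDisc T := by
        rw [← chainDisc_take_one T (by omega), show (1:ℕ) = T.length from hn.symm,
          List.take_length]
      rw [chainLd, h1, h2, if_pos rfl, if_pos hn.symm]
      push_cast [h3]
      field_simp
      norm_num
    · -- n ≥ 2, j = 1
      rw [if_pos (⟨by omega, by omega⟩ : 1 ≤ 2 ∧ 2 ≤ T.length)]
      rw [if_pos rfl, if_neg (by omega : ¬(1 : ℕ) = T.length)]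
      have hdrop := chainDisc_drop_step T 1 (le_refl 1) (by omega)
      rw [show (1:ℕ) - 1 = 0 from rfl, List.drop_zero] at hdrop
      have htake1 : chainDisc (T.take (2 - 1)) = T.getD 0 0 := by
        rw [show (2:ℕ) - 1 = 1 from rfl, chainDisc_take_one T (by omega)]
      rw [chainLd, chainLd, show (1:ℕ) - 1 = 0 from rfl, List.take_zero, chainDisc_nil, htake1]
      have hdropQ := congrArg (fun z : ℤ => (z : ℚ)) hdrop
      push_cast at hdropQ
      field_simp
      linear_combination -hdropQ
  · by_cases hn : j = T.length
    · -- j = n ≥ 2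
      subst hn
      rw [if_pos (⟨by omega, by omega⟩ : 1 ≤ T.length - 1 ∧ T.length - 1 ≤ T.length)]
      rw [if_neg (by omega : ¬(1 ≤ T.length + 1 ∧ T.length + 1 ≤ T.length))]
      rw [if_neg hj, if_pos rfl]
      have htake := chainDisc_take_step T T.length (by omega) (le_refl _)
      rw [List.take_length] at htake
      have hQn : chainDisc (T.drop T.length) = 1 := by rw [List.drop_length, chainDisc_nil]
      have hQn1 : chainDisc (T.drop (T.length - 1)) = T.getD (T.length - 1) 0 :=
        chainDisc_drop_last T (by omega)
      rw [chainLd, chainLd, hQn, hQn1, show T.length - 1 - 1 = T.length - 2 from rfl]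
      have htakeQ := congrArg (fun z : ℤ => (z : ℚ)) htake
      push_cast at htakeQ
      field_simp
      linear_combination -htakeQ
    · -- 1 < j < n
      rw [if_pos (⟨by omega, by omega⟩ : 1 ≤ j - 1 ∧ j - 1 ≤ T.length)]
      rw [if_pos (⟨by omega, by omega⟩ : 1 ≤ j + 1 ∧ j + 1 ≤ T.length)]
      rw [if_neg hj, if_neg hn]
      have htake := chainDisc_take_step T j (by omega) (by omega)
      have hdrop := chainDisc_drop_step T j (by omega) (by omega)
      rw [chainLd, chainLd, chainLd, show j - 1 - 1 = j - 2 from rfl,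
        show j + 1 - 1 = j from rfl]
      have htakeQ := congrArg (fun z : ℤ => (z : ℚ)) htake
      have hdropQ := congrArg (fun z : ℤ => (z : ℚ)) hdrop
      push_cast at htakeQ hdropQ
      field_simp
      linear_combination -htakeQ - hdropQ

theorem chain_log_discrepancies_adjunction (T : List ℤ) (h : ∀ a ∈ T, 2 ≤ a) :
    IsAdjunctionSolution T (fun j => if 1 ≤ j ∧ j ≤ T.length then chainLd T j else 0) ∧
      ∀ u : ℕ → ℚ, IsAdjunctionSolution T u →
        ∀ j, 1 ≤ j → j ≤ T.length → u j = chainLd T j := by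
  have hsol := chainLd_adjunction T h
  refine ⟨hsol, ?_⟩
  intro u hu j hj1 hjn
  have hD : (0:ℤ) < chainDisc T := chainDisc_pos T h
  have hDQ : (chainDisc T : ℚ) ≠ 0 := by exact_mod_cast hD.ne'
  set v : ℕ → ℚ := fun j => if 1 ≤ j ∧ j ≤ T.length then chainLd T j else 0 with hv
  have hw : ∀ k, 1 ≤ k → k ≤ T.length →
      (T.getD (k - 1) 0 : ℚ) * (u k - v k) - (u (k - 1) - v (k - 1)) -
        (u (k + 1) - v (k + 1)) = 0 := by
    intro k h1 h2
    have e1 := hu.2.2 k h1 h2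
    have e2 := hsol.2.2 k h1 h2
    linear_combination e1 - e2
  have claim : ∀ k, k ≤ T.length →
      u (k + 1) - v (k + 1) = (chainDisc (T.take k) : ℚ) * (u 1 - v 1) := by
    intro k
    induction k using Nat.strong_induction_on with
    | _ k ih =>
      match k with
      | 0 =>
          intro _
          rw [List.take_zero, chainDisc_nil]
          push_cast
          ring
      | 1 =>
          intro hk
          have e := hw 1 (le_refl 1) hk
          have h0u : u 0 = 0 := hu.1
          have h0v : v 0 = 0 := hsol.1
          have ht : chainDisc (T.take 1) = T.getD 0 0 := chainDisc_take_one T hk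
          rw [ht]
          rw [show (1:ℕ) - 1 = 0 from rfl] at e
          rw [h0u, h0v] at e
          linear_combination -e
      | (k + 2) =>
          intro hk
          have e := hw (k + 2) (by omega) hk
          have ih1 := ih (k + 1) (by omega) (by omega)
          have ih0 := ih k (by omega) (by omega)
          have htake := chainDisc_take_step T (k + 2) (by omega) (by omega)
          rw [show k + 2 - 1 = k + 1 from rfl, show k + 2 - 2 = k from rfl] at htake
          rw [show k + 2 - 1 = k + 1 from rfl] at e
          rw [show k + 2 + 1 = k + 3 from rfl] at e
          rw [show k + 1 + 1 = k + 2 from rfl] at ih1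
          rw [show k + 2 + 1 = k + 3 from rfl]
          rw [htake]
          push_cast
          linear_combination -e + ((T.getD (k + 1) 0 : ℚ)) * ih1 - ih0
  have hfinal := claim T.length (le_refl _)
  rw [hu.2.1, hsol.2.1, List.take_length] at hfinal
  norm_num at hfinal
  have hw1 : u 1 - v 1 = 0 := by
    rcases hfinal with hc | hc
    · exact absurd hc hD.ne'
    · exact hc
  have hj := claim (j - 1) (by omega)
  rw [show j - 1 + 1 = j by omega, hw1, mul_zero] at hj
  have : u j = v j := by linarith [hj]
  rw [this, hv]
  simp only []
  rw [if_pos ⟨hj1, hjn⟩]
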